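/- Define h(x) = (1/(2πi)) ∫_{-∞}^{∞} e^{-(y² + x²)/2}/(y + ix) dy for real x ≠ 0. Then h(x) = (1/√(2π)) ∫_{-∞}^{x} e^{-y²/2} dy for x < 0, and h(x) = -(1/√(2π)) ∫_{x}^{∞} e^{-y²/2} dy for x > 0. -/

import Mathlib

set_option maxHeartbeats 1000000

open Real MeasureTheory Set Complex Filter

-- A: ∫_0^∞ e^{-ct} dt = 1/c for Re c > 0
lemma lemA (c : ℂ) (hc : 0 < c.re) :
    ∫ t in Ioi (0:ℝ), Complex.exp (-(c * t)) = 1 / c := by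
  have hint : IntegrableOn (fun t : ℝ => Complex.exp (-(c * t))) (Ioi 0) := by
    refine (Integrable.mono' (exp_neg_integrableOn_Ioi 0 hc)
      ?_ ?_)
    · exact (Complex.continuous_exp.comp (by continuity)).aestronglyMeasurable
    · filter_upwards with t
      simp [Complex.norm_exp]
  have hderiv : ∀ t ∈ Ici (0:ℝ), HasDerivAt (fun t : ℝ => -Complex.exp (-(c * t)) / c)
      (Complex.exp (-(c * t))) t := by
    intro t _
    have h1 : HasDerivAt (fun t : ℝ => -(c * (t:ℂ))) (-c) t := by
      exact (((hasDerivAt_id t).ofReal_comp.const_mul c).neg).congr_deriv (by simp)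
    have h2 := (h1.cexp).neg.div_const c
    have hc0 : c ≠ 0 := fun h => by simp [h] at hc
    convert h2 using 1
    · rfl
    · rfl
    · rw [mul_neg, neg_neg, mul_div_assoc, div_self hc0, mul_one]
  have htend : Tendsto (fun t : ℝ => -Complex.exp (-(c * t)) / c) atTop (nhds 0) := by
    rw [tendsto_zero_iff_norm_tendsto_zero]
    have : (fun t : ℝ => ‖-Complex.exp (-(c * t)) / c‖)
        = fun t : ℝ => Real.exp (-(c.re * t)) / ‖c‖ := by
      funext t; simp [Complex.norm_exp]
    rw [this]
    have : Tendsto (fun t : ℝ => Real.exp (-(c.re * t))) atTop (nhds 0) := by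
      apply Real.tendsto_exp_atBot.comp
      exact tendsto_neg_atBot_iff.mpr (tendsto_id.const_mul_atTop hc)
    simpa using this.div_const ‖c‖
  have := integral_Ioi_of_hasDerivAt_of_tendsto' hderiv hint htend
  rw [this]
  simp [zero_sub, neg_div, one_div]


lemma hinner (x t : ℝ) :
    (∫ y : ℝ, ((Real.exp (-(y ^ 2 + x ^ 2) / 2) : ℝ) : ℂ) * (-Complex.I * Complex.exp (-(((x:ℂ) - Complex.I * y) * t))))
      = -Complex.I * ((Real.sqrt (2*π) : ℝ) : ℂ) * ((Real.exp (-(t + x)^2/2) : ℝ) : ℂ) := by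
  have hb : (0:ℝ) < ((1/2 : ℂ)).re := by norm_num
  have hKeq : (fun y : ℝ => ((Real.exp (-(y ^ 2 + x ^ 2) / 2) : ℝ) : ℂ) * (-Complex.I * Complex.exp (-(((x:ℂ) - Complex.I * y) * t)))) = fun y : ℝ =>
      (-Complex.I * Complex.exp (-(x:ℂ)^2/2 - x * t)) *
        (Complex.exp (Complex.I * t * y) * Complex.exp (-(1/2 : ℂ) * (y:ℂ) ^ 2)) := by
    funext y
    have habc : ((-(y ^ 2 + x ^ 2) / 2 : ℝ) : ℂ) + -(((x:ℂ) - Complex.I * y) * t)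
        = (-(x:ℂ)^2/2 - x * t) + (Complex.I * t * y + -(1/2 : ℂ) * (y:ℂ) ^ 2) := by
      push_cast; ring
    calc ((Real.exp (-(y ^ 2 + x ^ 2) / 2) : ℝ) : ℂ) * (-Complex.I * Complex.exp (-(((x:ℂ) - Complex.I * y) * t)))
        = -Complex.I * Complex.exp (((-(y ^ 2 + x ^ 2) / 2 : ℝ) : ℂ) + -(((x:ℂ) - Complex.I * y) * t)) := by
          rw [Complex.exp_add, Complex.ofReal_exp]; ring
      _ = -Complex.I * Complex.exp ((-(x:ℂ)^2/2 - x * t) + (Complex.I * t * y + -(1/2 : ℂ) * (y:ℂ) ^ 2)) := by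
          rw [habc]
      _ = _ := by rw [Complex.exp_add, Complex.exp_add]; ring
  rw [hKeq, integral_const_mul, fourierIntegral_gaussian hb ((t:ℝ):ℂ)]
  have h1 : ((π:ℂ) / (1/2)) ^ (1/2 : ℂ) = ((Real.sqrt (2*π) : ℝ) : ℂ) := by
    have h2 : ((π:ℂ) / (1/2)) = ((2*π : ℝ) : ℂ) := by push_cast; ring
    rw [h2, Real.sqrt_eq_rpow, Complex.ofReal_cpow (by positivity)]
    norm_num
  rw [h1]
  have habc2 : ((-(x:ℂ) ^ 2 / 2 - ↑x * ↑t) + -(t:ℂ) ^ 2 / (4 * (1 / 2)))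
      = ((-(t + x)^2/2 : ℝ) : ℂ) := by push_cast; ring
  calc -Complex.I * Complex.exp (-(x:ℂ) ^ 2 / 2 - ↑x * ↑t) *
        (((Real.sqrt (2 * π) : ℝ):ℂ) * Complex.exp (-(t:ℂ) ^ 2 / (4 * (1 / 2))))
      = -Complex.I * ((Real.sqrt (2 * π) : ℝ):ℂ) *
        Complex.exp ((-(x:ℂ) ^ 2 / 2 - ↑x * ↑t) + -(t:ℂ) ^ 2 / (4 * (1 / 2))) := by
        rw [Complex.exp_add]; ring
    _ = _ := by rw [habc2, Complex.ofReal_exp]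

lemma key0 (x : ℝ) (hx : 0 < x) :
    (1 / (2 * (π : ℂ) * Complex.I)) *
        ∫ y : ℝ, ((Real.exp (-(y ^ 2 + x ^ 2) / 2) : ℝ) : ℂ) / ((y : ℂ) + Complex.I * (x : ℂ))
      = -((1 / Real.sqrt (2 * π) : ℝ) : ℂ) * ((∫ y in Set.Ioi x, Real.exp (-y ^ 2 / 2) : ℝ) : ℂ) := by
  -- Step 1: pointwise representation
  have step1 : ∀ y : ℝ, ((Real.exp (-(y ^ 2 + x ^ 2) / 2) : ℝ) : ℂ) / ((y : ℂ) + Complex.I * (x : ℂ))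
      = ∫ t in Set.Ioi (0:ℝ), ((Real.exp (-(y ^ 2 + x ^ 2) / 2) : ℝ) : ℂ) *
          (-Complex.I * Complex.exp (-(((x:ℂ) - Complex.I * y) * t))) := by
    intro y
    have hc : (0:ℝ) < ((x:ℂ) - Complex.I * y).re := by simp [hx]
    have hc0 : ((x:ℂ) - Complex.I * y) ≠ 0 := fun h => by
      rw [h] at hc; simp at hc
    rw [integral_const_mul, integral_const_mul, lemA _ hc]
    have hne : (y : ℂ) + Complex.I * (x : ℂ) ≠ 0 := by
      intro h
      have := congrArg Complex.im h
      simp [hx.ne'] at this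
    field_simp
    rw [← neg_div, eq_div_iff (by rw [mul_comm]; exact hc0)]
    linear_combination (x:ℂ) * Complex.I_sq
  -- Step 2: integrability on the product
  have step2 : Integrable (Function.uncurry (fun (y t : ℝ) =>
        ((Real.exp (-(y ^ 2 + x ^ 2) / 2) : ℝ) : ℂ) *
          (-Complex.I * Complex.exp (-(((x:ℂ) - Complex.I * y) * t)))))
      (volume.prod (volume.restrict (Set.Ioi (0:ℝ)))) := by
    have hf : Integrable (fun y : ℝ => Real.exp (-(y ^ 2 + x ^ 2) / 2)) volume := by
      have h : (fun y : ℝ => Real.exp (-(y ^ 2 + x ^ 2) / 2))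
          = fun y : ℝ => Real.exp (-(1/2) * y ^ 2) * Real.exp (-(x^2)/2) := by
        funext y; rw [← Real.exp_add]; ring_nf
      rw [h]
      exact (integrable_exp_neg_mul_sq (by norm_num : (0:ℝ) < 1/2)).mul_const _
    have hg : Integrable (fun t : ℝ => Real.exp (-x * t)) (volume.restrict (Set.Ioi 0)) :=
      exp_neg_integrableOn_Ioi 0 hx
    refine (hf.mul_prod hg).mono' ?_ ?_
    · apply Continuous.aestronglyMeasurable
      apply Continuous.mul
      · exact Complex.continuous_ofReal.comp (by continuity)
      · exact continuous_const.mul (Complex.continuous_exp.comp (by continuity))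
    · filter_upwards with p
      rcases p with ⟨y, t⟩
      have : ‖((Real.exp (-(y ^ 2 + x ^ 2) / 2) : ℝ) : ℂ) *
          (-Complex.I * Complex.exp (-(((x:ℂ) - Complex.I * y) * t)))‖
          = Real.exp (-(y ^ 2 + x ^ 2) / 2) * Real.exp (-x * t) := by
        rw [norm_mul, norm_mul, Complex.norm_real, norm_neg, Complex.norm_I, one_mul,
          Real.norm_eq_abs, abs_of_pos (Real.exp_pos _), Complex.norm_exp]
        congr 2
        simp
      simp only [Function.uncurry_apply_pair]
      exact le_of_eq this
  -- swap and inner integral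
  rw [show (∫ y : ℝ, ((Real.exp (-(y ^ 2 + x ^ 2) / 2) : ℝ) : ℂ) / ((y : ℂ) + Complex.I * (x : ℂ)))
      = ∫ y : ℝ, ∫ t in Set.Ioi (0:ℝ), ((Real.exp (-(y ^ 2 + x ^ 2) / 2) : ℝ) : ℂ) *
          (-Complex.I * Complex.exp (-(((x:ℂ) - Complex.I * y) * t)))
      from integral_congr_ae (.of_forall step1)]
  rw [integral_integral_swap step2]
  simp_rw [hinner x]
  rw [integral_const_mul]
  have hOf : (∫ t in Set.Ioi (0:ℝ), ((Real.exp (-(t+x)^2/2) : ℝ) : ℂ))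
      = ((∫ t in Set.Ioi (0:ℝ), Real.exp (-(t+x)^2/2) : ℝ) : ℂ) := integral_ofReal
  rw [hOf]
  -- Step 5: shift
  have step5 : (∫ t in Set.Ioi (0:ℝ), Real.exp (-(t + x)^2/2))
      = ∫ u in Set.Ioi x, Real.exp (-u^2/2) := by
    have hmp : MeasurePreserving (fun t : ℝ => t + x) volume volume :=
      measurePreserving_add_right volume x
    have hemb : MeasurableEmbedding (fun t : ℝ => t + x) :=
      (Homeomorph.addRight x).isClosedEmbedding.measurableEmbedding
    have h := hmp.setIntegral_preimage_emb hemb (fun u => Real.exp (-u^2/2)) (Set.Ioi x)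
    rw [← h]
    congr 1
    ext t
    simp
  rw [step5]
  -- Step 6: constants
  have hs : ((Real.sqrt (2*π) : ℝ) : ℂ) ≠ 0 := by
    simp only [ne_eq, Complex.ofReal_eq_zero]
    positivity
  have hs2 : ((Real.sqrt (2*π) : ℝ) : ℂ) * ((Real.sqrt (2*π) : ℝ) : ℂ) = 2 * (π:ℂ) := by
    rw [← Complex.ofReal_mul, Real.mul_self_sqrt (by positivity)]
    push_cast; ring
  have hpi : (π:ℂ) ≠ 0 := by
    simp only [ne_eq, Complex.ofReal_eq_zero]
    exact Real.pi_ne_zero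
  set J : ℂ := ((∫ u in Set.Ioi x, Real.exp (-u^2/2) : ℝ) : ℂ) with hJ
  have ha2 : ((Real.sqrt 2 : ℝ):ℂ) * ((Real.sqrt 2 : ℝ):ℂ) = 2 := by
    rw [← Complex.ofReal_mul, Real.mul_self_sqrt (by norm_num)]
    norm_num
  have hb2 : ((Real.sqrt π : ℝ):ℂ) * ((Real.sqrt π : ℝ):ℂ) = (π:ℂ) := by
    rw [← Complex.ofReal_mul, Real.mul_self_sqrt Real.pi_pos.le]
  field_simp
  rw [Complex.ofReal_div, Complex.ofReal_one, ← hs2]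
  field_simp

theorem stmt16 (x : ℝ) (hx : x ≠ 0) :
    (x < 0 →
      (1 / (2 * (π : ℂ) * Complex.I)) *
          ∫ y : ℝ, ((Real.exp (-(y ^ 2 + x ^ 2) / 2) : ℝ) : ℂ) / ((y : ℂ) + Complex.I * (x : ℂ))
        = (((1 / Real.sqrt (2 * π)) * ∫ y in Set.Iic x, Real.exp (-y ^ 2 / 2) : ℝ) : ℂ)) ∧
    (0 < x →
      (1 / (2 * (π : ℂ) * Complex.I)) *
          ∫ y : ℝ, ((Real.exp (-(y ^ 2 + x ^ 2) / 2) : ℝ) : ℂ) / ((y : ℂ) + Complex.I * (x : ℂ))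
        = ((-((1 / Real.sqrt (2 * π)) * ∫ y in Set.Ioi x, Real.exp (-y ^ 2 / 2)) : ℝ) : ℂ)) := by
  constructor
  · intro hneg
    have hpos : 0 < -x := by linarith
    -- oddness of the integral
    have hodd : (∫ y : ℝ, ((Real.exp (-(y ^ 2 + x ^ 2) / 2) : ℝ) : ℂ) / ((y : ℂ) + Complex.I * (x : ℂ)))
        = -∫ y : ℝ, ((Real.exp (-(y ^ 2 + (-x) ^ 2) / 2) : ℝ) : ℂ) / ((y : ℂ) + Complex.I * ((-x : ℝ) : ℂ)) := by
      rw [← MeasureTheory.integral_neg_eq_self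
        (fun y : ℝ => ((Real.exp (-(y ^ 2 + x ^ 2) / 2) : ℝ) : ℂ) / ((y : ℂ) + Complex.I * (x : ℂ)))]
      rw [← integral_neg]
      congr 1
      funext y
      have h1 : (((-y : ℝ)) : ℂ) + Complex.I * (x : ℂ) = -(((y : ℝ) : ℂ) + Complex.I * ((-x : ℝ) : ℂ)) := by
        push_cast; ring
      rw [h1]
      have h2 : ((-y) ^ 2 + x ^ 2 : ℝ) = (y ^ 2 + (-x) ^ 2 : ℝ) := by ring
      rw [h2, div_neg]
    rw [hodd, mul_neg, key0 (-x) hpos]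
    have hIic : (∫ u in Set.Ioi (-x), Real.exp (-u^2/2)) = ∫ u in Set.Iic x, Real.exp (-u^2/2) := by
      have h3 : (∫ u in Set.Iic x, Real.exp (-u^2/2)) = ∫ u in Set.Iic x, Real.exp (-(-u)^2/2) := by
        congr 1
        funext u
        rw [neg_pow]
        norm_num
      rw [h3]
      exact (integral_comp_neg_Iic x (fun u => Real.exp (-u^2/2))).symm
    rw [hIic]
    push_cast
    ring
  · intro hpos
    rw [key0 x hpos]
    push_cast
    ring
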